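/- Let n ≥ 3 and let c ∈ ℤ^n satisfy c_1 ≥ c_2 ≥ ⋯ ≥ c_n ≥ 0. Then the minimum of |p(S)·c| over all subsets S of {1,…,n} equals the minimum of |p(S)·c| over all subsets S of {1,…,n} with p(S) ∈ Q(n); in other words, the optimum of the partition problem is always attained at a subset S with p(S) ∈ Q(n). -/

import Mathlib

open Finset

/-- Cumulative sum: `x 0 + ... + x k`. -/
def cum {n : ℕ} (x : Fin n → ℤ) (k : Fin n) : ℤ := ∑ i ∈ Finset.Iic k, x i

/-- The partial order `⪯`: every partial sum of `x` is at most that of `y`. -/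
def ple {n : ℕ} (x y : Fin n → ℤ) : Prop := ∀ k : Fin n, cum x k ≤ cum y k

/-- Membership in `P(n)`: all entries are `1` or `-1`. -/
def isPM {n : ℕ} (v : Fin n → ℤ) : Prop := ∀ i, v i = 1 ∨ v i = -1

/-- Membership in `Q(n)`. -/
def inQ {n : ℕ} (v : Fin n → ℤ) : Prop := isPM v ∧ ¬ ple v 0 ∧ ¬ ple 0 v

/-- Standard inner product on `ℤ^n`. -/
def dotp {n : ℕ} (x y : Fin n → ℤ) : ℤ := ∑ i, x i * y i

/-- The ±1 vector of a subset `S`. -/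
def pS {n : ℕ} (S : Finset (Fin n)) : Fin n → ℤ := fun i => if i ∈ S then 1 else -1

/-- The vector `m_k`: first `k` entries 1, next `k+1` entries −1, rest 1 (0-indexed). -/
def mvec (n k : ℕ) : Fin n → ℤ := fun i => if i.val < k then 1 else if i.val < 2 * k + 1 then -1 else 1

/-- An instance of the partition problem: `c_1 ≥ c_2 ≥ ⋯ ≥ c_n ≥ 0`. -/
def monoc {n : ℕ} (c : Fin n → ℤ) : Prop := (∀ i j : Fin n, i ≤ j → c j ≤ c i) ∧ ∀ i, 0 ≤ c i

/-- ℕ-extension of a `Fin n`-vector. -/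
def extZ {n : ℕ} (v : Fin n → ℤ) : ℕ → ℤ := fun i => if h : i < n then v ⟨i, h⟩ else 0

lemma cum_eq_range {n : ℕ} (v : Fin n → ℤ) (k : Fin n) :
    cum v k = ∑ i ∈ Finset.range (k.val + 1), extZ v i := by
  have hk := k.isLt
  have h1 : cum v k = ∑ i : Fin n, if i ≤ k then v i else 0 := by
    rw [cum, ← Finset.sum_filter]
    congr 1
    ext i
    simp
  have h2 : ∀ i : Fin n, (if i ≤ k then v i else 0)
      = (fun m => if m ≤ k.val then extZ v m else 0) i.val := by
    intro i
    have hi : i.val < n := i.isLt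
    simp only [extZ]
    rw [dif_pos hi]
    by_cases h : i ≤ k
    · rw [if_pos h, if_pos (Fin.le_def.mp h), Fin.eta]
    · rw [if_neg h, if_neg (fun hh => h (Fin.le_def.mpr hh))]
  calc cum v k = ∑ i : Fin n, if i ≤ k then v i else 0 := h1
    _ = ∑ i : Fin n, (fun m => if m ≤ k.val then extZ v m else 0) i.val :=
        Finset.sum_congr rfl (fun i _ => h2 i)
    _ = ∑ m ∈ Finset.range n, (if m ≤ k.val then extZ v m else 0) :=
        Fin.sum_univ_eq_sum_range (fun m => if m ≤ k.val then extZ v m else 0) n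
    _ = ∑ m ∈ Finset.filter (· ≤ k.val) (Finset.range n), extZ v m :=
        (Finset.sum_filter _ _).symm
    _ = ∑ i ∈ Finset.range (k.val + 1), extZ v i := by
        congr 1
        ext m
        simp only [Finset.mem_filter, Finset.mem_range]
        omega

lemma cum_zero {n : ℕ} (k : Fin n) : cum (0 : Fin n → ℤ) k = 0 := by simp [cum]

lemma key_nonneg (f g : ℕ → ℤ) (n : ℕ)
    (hF : ∀ k, k ≤ n → 0 ≤ ∑ i ∈ Finset.range k, f i)
    (hg : ∀ i j, i ≤ j → j < n → g j ≤ g i)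
    (hg0 : ∀ i, i < n → 0 ≤ g i) :
    0 ≤ ∑ i ∈ Finset.range n, f i * g i := by
  have key : ∀ k, k ≤ n → (∑ i ∈ Finset.range k, f i) * g (k - 1) ≤ ∑ i ∈ Finset.range k, f i * g i := by
    intro k
    induction k with
    | zero => simp
    | succ m ih =>
      intro hm
      have h1 := ih (by omega)
      rw [Finset.sum_range_succ, Finset.sum_range_succ]
      have h2 : (∑ i ∈ Finset.range m, f i) * g m ≤ (∑ i ∈ Finset.range m, f i) * g (m - 1) :=
        mul_le_mul_of_nonneg_left (hg (m - 1) m (by omega) (by omega)) (hF m (by omega))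
      have h3 : (m + 1 - 1) = m := by omega
      rw [h3]
      have expand : (∑ i ∈ Finset.range m, f i + f m) * g m
          = (∑ i ∈ Finset.range m, f i) * g m + f m * g m := add_mul _ _ _
      linarith
  rcases Nat.eq_zero_or_pos n with h | h
  · simp [h]
  · have h1 := key n le_rfl
    have h0 : 0 ≤ (∑ i ∈ Finset.range n, f i) * g (n - 1) :=
      mul_nonneg (hF n le_rfl) (hg0 (n - 1) (by omega))
    linarith

lemma dotp_nonneg' {n : ℕ} {v c : Fin n → ℤ} (hv : ∀ k : Fin n, 0 ≤ cum v k) (hc : monoc c) :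
    0 ≤ dotp v c := by
  have hd : dotp v c = ∑ i ∈ Finset.range n, extZ v i * extZ c i := by
    rw [dotp, ← Fin.sum_univ_eq_sum_range (fun m => extZ v m * extZ c m) n]
    exact Finset.sum_congr rfl (fun i _ => by simp [extZ, i.isLt])
  rw [hd]
  apply key_nonneg
  · intro k hk
    cases k with
    | zero => simp
    | succ m =>
      have hm : m < n := by omega
      have h := hv ⟨m, hm⟩
      rwa [cum_eq_range] at h
  · intro i j hij hj
    have h := hc.1 ⟨i, by omega⟩ ⟨j, hj⟩ (by simpa [Fin.le_def] using hij)
    simpa [extZ, hj, show i < n by omega] using h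
  · intro i hi
    simpa [extZ, hi] using hc.2 ⟨i, hi⟩

lemma dotp_mono {n : ℕ} {x y c : Fin n → ℤ} (h : ple x y) (hc : monoc c) :
    dotp x c ≤ dotp y c := by
  have h0 : ∀ k : Fin n, 0 ≤ cum (fun i => y i - x i) k := by
    intro k
    have hk := h k
    unfold cum at hk ⊢
    rw [Finset.sum_sub_distrib]
    linarith
  have h1 := dotp_nonneg' (c := c) h0 hc
  unfold dotp at h1 ⊢
  rw [Finset.sum_congr rfl (fun i (_ : i ∈ Finset.univ) => sub_mul (y i) (x i) (c i)),
    Finset.sum_sub_distrib] at h1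
  linarith

lemma isPM_pS {n : ℕ} (S : Finset (Fin n)) : isPM (pS S) := by
  intro i
  unfold pS
  split <;> simp

lemma cum_pS_compl {n : ℕ} (S : Finset (Fin n)) (k : Fin n) :
    cum (pS Sᶜ) k = - cum (pS S) k := by
  unfold cum
  rw [← Finset.sum_neg_distrib]
  exact Finset.sum_congr rfl fun i _ => by by_cases h : i ∈ S <;> simp [pS, h]

lemma dotp_pS_compl {n : ℕ} (S : Finset (Fin n)) (c : Fin n → ℤ) :
    dotp (pS Sᶜ) c = - dotp (pS S) c := by
  unfold dotp
  rw [← Finset.sum_neg_distrib]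
  exact Finset.sum_congr rfl fun i _ => by by_cases h : i ∈ S <;> simp [pS, h]

lemma cum_pos_even {n : ℕ} {v : Fin n → ℤ} (hPM : isPM v) {k : Fin n}
    (h0 : 0 ≤ cum v k) (hk : k.val % 2 = 0) : 1 ≤ cum v k := by
  have hkn := k.isLt
  rw [cum_eq_range] at h0 ⊢
  have hdvd : (2 : ℤ) ∣ ∑ i ∈ Finset.range (k.val + 1), (extZ v i - 1) := by
    apply Finset.dvd_sum
    intro i hi
    have hin : i < n := by
      have := Finset.mem_range.mp hi
      omega
    rcases hPM ⟨i, hin⟩ with h | h <;> simp [extZ, hin, h]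
  rw [Finset.sum_sub_distrib, Finset.sum_const, Finset.card_range] at hdvd
  obtain ⟨t, ht⟩ := hdvd
  simp only [nsmul_eq_mul, mul_one] at ht
  omega

lemma main_lemma {n : ℕ} (hn : 3 ≤ n) (c : Fin n → ℤ) (hc : monoc c) (S₀ : Finset (Fin n))
    (hmin : ∀ S', |dotp (pS S₀) c| ≤ |dotp (pS S') c|) (hple : ple 0 (pS S₀)) :
    ∃ S : Finset (Fin n), inQ (pS S) ∧ ∀ S', |dotp (pS S) c| ≤ |dotp (pS S') c| := by
  set z : Fin n := ⟨0, by omega⟩ with hz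
  have hzv : z.val = 0 := rfl
  set v := pS S₀ with hv
  have hvk : ∀ k, 0 ≤ cum v k := fun k => by
    have h := hple k; rwa [cum_zero] at h
  have ha : 0 ≤ dotp v c := dotp_nonneg' hvk hc
  have habs : |dotp v c| = dotp v c := abs_of_nonneg ha
  have hz_mem : ∀ k : Fin n, z ∈ Finset.Iic k := fun k =>
    Finset.mem_Iic.mpr (Fin.le_def.mpr (Nat.zero_le _))
  have hIz : Finset.Iic z = {z} := by
    ext i
    simp only [Finset.mem_Iic, Finset.mem_singleton, Fin.le_def, Fin.ext_iff]
    omega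
  have h0S : z ∈ S₀ := by
    by_contra h
    have h1 : cum v z = -1 := by simp [cum, hIz, hv, pS, h]
    have h2 := hvk z
    omega
  by_cases hne : S₀ᶜ = ∅
  · -- S₀ = univ : flip entry z
    have hall : ∀ i : Fin n, i ∈ S₀ := by
      intro i
      by_contra h
      have : i ∈ S₀ᶜ := Finset.mem_compl.mpr h
      simp [hne] at this
    set T := S₀.erase z with hT
    have hw : ∀ i, pS T i = pS S₀ i + (if i = z then (-2:ℤ) else 0) := by
      intro i
      by_cases h1 : i = z
      · subst h1
        simp [pS, hT, h0S]
      · simp [pS, hT, Finset.mem_erase, h1, hall i]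
    have hcum : ∀ k, cum (pS T) k = cum v k + (if z ∈ Finset.Iic k then (-2:ℤ) else 0) := by
      intro k
      unfold cum
      rw [Finset.sum_congr rfl (fun i _ => hw i), Finset.sum_add_distrib,
        Finset.sum_ite_eq' (Finset.Iic k) z (fun _ => (-2:ℤ))]
    have hdot : dotp (pS T) c = dotp v c - 2 * c z := by
      unfold dotp
      have he : ∀ i, pS T i * c i = v i * c i + (if i = z then -2 * c i else 0) := by
        intro i
        rw [hw i]
        by_cases h1 : i = z <;> simp [h1, hv] <;> ring
      rw [Finset.sum_congr rfl (fun i _ => he i), Finset.sum_add_distrib,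
        Finset.sum_ite_eq' Finset.univ z (fun i => -2 * c i)]
      simp
      ring
    have hsum : dotp v c = ∑ i, c i :=
      Finset.sum_congr rfl (fun i _ => by simp [hv, pS, hall i])
    have hczle : c z ≤ dotp v c := by
      rw [hsum]
      exact Finset.single_le_sum (fun i _ => hc.2 i) (Finset.mem_univ z)
    have habsw : |dotp (pS T) c| ≤ dotp v c := by
      rw [hdot, abs_le]
      constructor
      · linarith
      · have := hc.2 z; linarith
    have hcneg : cum (pS T) z = -1 := by
      rw [hcum z, if_pos (hz_mem z)]
      have : cum v z = 1 := by simp [cum, hIz, hv, pS, h0S]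
      omega
    have hcpos : 0 < cum (pS T) ⟨2, by omega⟩ := by
      rw [cum_eq_range]
      rw [show ((⟨2, by omega⟩ : Fin n)).val + 1 = 3 from rfl]
      rw [Finset.sum_range_succ, Finset.sum_range_succ, Finset.sum_range_one]
      have e0 : extZ (pS T) 0 = -1 := by
        simp only [extZ]
        rw [dif_pos (show 0 < n by omega)]
        have hzz : (⟨0, show 0 < n by omega⟩ : Fin n) = z := rfl
        rw [hzz, hw z, if_pos rfl]
        simp [hv, pS, h0S]
      have e12 : ∀ (m : ℕ) (hm : m < n), 0 < m → extZ (pS T) m = 1 := by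
        intro m hm hm0
        simp only [extZ]
        rw [dif_pos hm]
        have h2 : (⟨m, hm⟩ : Fin n) ≠ z := by
          simp only [ne_eq, Fin.ext_iff]
          omega
        simp [pS, hT, Finset.mem_erase, h2, hall]
      rw [e0, e12 1 (by omega) (by omega), e12 2 (by omega) (by omega)]
      norm_num
    refine ⟨T, ⟨isPM_pS T, ?_, ?_⟩, ?_⟩
    · intro h
      have := h ⟨2, by omega⟩
      rw [cum_zero] at this
      omega
    · intro h
      have := h z
      rw [cum_zero] at this
      omega
    · intro S'
      calc |dotp (pS T) c| ≤ dotp v c := habsw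
        _ = |dotp v c| := habs.symm
        _ ≤ |dotp (pS S') c| := hmin S'
  · -- S₀ᶜ nonempty : swap entries z and j
    have hne' : S₀ᶜ.Nonempty := Finset.nonempty_iff_ne_empty.mpr hne
    set j := S₀ᶜ.min' hne' with hj
    have hjS : j ∉ S₀ := Finset.mem_compl.mp (S₀ᶜ.min'_mem hne')
    have hjmin : ∀ i : Fin n, i.val < j.val → i ∈ S₀ := by
      intro i hi
      by_contra h
      have := S₀ᶜ.min'_le i (Finset.mem_compl.mpr h)
      rw [Fin.le_def] at this
      omega
    have hj0 : j ≠ z := fun h => hjS (h ▸ h0S)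
    have hj0' : 0 < j.val := by
      rcases Nat.eq_zero_or_pos j.val with h | h
      · exact absurd (Fin.ext h : j = z) hj0
      · exact h
    set T := insert j (S₀.erase z) with hT
    have hw : ∀ i, pS T i = pS S₀ i + ((if i = z then (-2:ℤ) else 0) + (if i = j then (2:ℤ) else 0)) := by
      intro i
      by_cases h1 : i = z
      · subst h1
        have hzj : ¬ z = j := fun h => hj0 h.symm
        have hzT : z ∉ T := by
          simp only [hT, Finset.mem_insert, Finset.mem_erase]
          push_neg
          exact ⟨hzj, fun h => absurd rfl h⟩
        rw [if_pos rfl, if_neg hzj]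
        simp [pS, hzT, h0S]
      · by_cases h2 : i = j
        · subst h2
          simp [pS, hT, Finset.mem_insert, hjS, h1]
        · have hiT : (i ∈ T) = (i ∈ S₀) := by
            simp [hT, Finset.mem_insert, Finset.mem_erase, h1, h2]
          simp [pS, hiT, h1, h2]
    have hcum : ∀ k, cum (pS T) k = cum v k +
        ((if z ∈ Finset.Iic k then (-2:ℤ) else 0) + (if j ∈ Finset.Iic k then (2:ℤ) else 0)) := by
      intro k
      unfold cum
      rw [Finset.sum_congr rfl (fun i _ => hw i), Finset.sum_add_distrib, Finset.sum_add_distrib,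
        Finset.sum_ite_eq' (Finset.Iic k) z (fun _ => (-2:ℤ)),
        Finset.sum_ite_eq' (Finset.Iic k) j (fun _ => (2:ℤ))]
    have hdot : dotp (pS T) c = dotp v c + (-2 * c z + 2 * c j) := by
      unfold dotp
      have he : ∀ i, pS T i * c i
          = v i * c i + ((if i = z then -2 * c i else 0) + (if i = j then 2 * c i else 0)) := by
        intro i
        rw [hw i]
        by_cases h1 : i = z <;> by_cases h2 : i = j <;> simp [h1, h2, hj0, Ne.symm hj0, hv] <;> ring
      rw [Finset.sum_congr rfl (fun i _ => he i), Finset.sum_add_distrib, Finset.sum_add_distrib,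
        Finset.sum_ite_eq' Finset.univ z (fun i => -2 * c i),
        Finset.sum_ite_eq' Finset.univ j (fun i => 2 * c i)]
      simp
    -- lower bound via u = e_z - e_j
    set u : Fin n → ℤ := fun i => (if i = z then (1:ℤ) else 0) + (if i = j then (-1:ℤ) else 0) with hu
    have hcumu : ∀ k, cum u k
        = (if z ∈ Finset.Iic k then (1:ℤ) else 0) + (if j ∈ Finset.Iic k then (-1:ℤ) else 0) := by
      intro k
      unfold cum
      rw [Finset.sum_add_distrib,
        Finset.sum_ite_eq' (Finset.Iic k) z (fun _ => (1:ℤ)),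
        Finset.sum_ite_eq' (Finset.Iic k) j (fun _ => (-1:ℤ))]
    have hplev : ple u v := by
      intro k
      rw [hcumu k, if_pos (hz_mem k)]
      by_cases hjk : j ∈ Finset.Iic k
      · rw [if_pos hjk]
        have := hvk k
        omega
      · rw [if_neg hjk]
        have hkj : k.val < j.val := by
          rw [Finset.mem_Iic, Fin.le_def] at hjk
          omega
        have hone : ∀ i ∈ Finset.Iic k, v i = 1 := by
          intro i hi
          have h1 : i.val < j.val := lt_of_le_of_lt (Fin.le_def.mp (Finset.mem_Iic.mp hi)) hkj
          simp [hv, pS, hjmin i h1]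
        have hcv : cum v k = ((Finset.Iic k).card : ℤ) := by
          unfold cum
          rw [Finset.sum_congr rfl hone, Finset.sum_const]
          simp
        have hcard : 0 < (Finset.Iic k).card :=
          Finset.card_pos.mpr ⟨k, Finset.mem_Iic.mpr le_rfl⟩
        rw [hcv]
        omega
    have hudot : dotp u c = c z - c j := by
      unfold dotp
      have he : ∀ i, u i * c i = (if i = z then c i else 0) + (if i = j then -c i else 0) := by
        intro i
        simp only [hu]
        by_cases h1 : i = z <;> by_cases h2 : i = j <;> simp [h1, h2, hj0, Ne.symm hj0] <;> ring
      rw [Finset.sum_congr rfl (fun i _ => he i), Finset.sum_add_distrib,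
        Finset.sum_ite_eq' Finset.univ z (fun i => c i),
        Finset.sum_ite_eq' Finset.univ j (fun i => -c i)]
      simp
      ring
    have hlow : c z - c j ≤ dotp v c := by
      have := dotp_mono hplev hc
      rwa [hudot] at this
    have hjz : c j ≤ c z := hc.1 z j (Fin.le_def.mpr (Nat.zero_le _))
    have habsw : |dotp (pS T) c| ≤ dotp v c := by
      rw [hdot, abs_le]
      constructor
      · linarith
      · linarith
    have hcneg : cum (pS T) z = -1 := by
      rw [hcum z, if_pos (hz_mem z)]
      have h1 : cum v z = 1 := by simp [cum, hIz, hv, pS, h0S]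
      have h2 : j ∉ Finset.Iic z := by
        rw [Finset.mem_Iic, Fin.le_def]
        omega
      rw [if_neg h2]
      omega
    have hpos : ∃ k : Fin n, 0 < cum (pS T) k := by
      by_cases hje : j.val % 2 = 0
      · refine ⟨j, ?_⟩
        rw [hcum j, if_pos (hz_mem j), if_pos (Finset.mem_Iic.mpr le_rfl)]
        have h1 : 1 ≤ cum v j := cum_pos_even (isPM_pS S₀) (hvk j) hje
        omega
      · by_cases hjn : j.val + 1 < n
        · refine ⟨⟨j.val + 1, hjn⟩, ?_⟩
          have hjk : j ∈ Finset.Iic (⟨j.val + 1, hjn⟩ : Fin n) := by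
            rw [Finset.mem_Iic, Fin.le_def]
            exact Nat.le_succ _
          rw [hcum _, if_pos (hz_mem _), if_pos hjk]
          have h1 : 1 ≤ cum v ⟨j.val + 1, hjn⟩ :=
            cum_pos_even (isPM_pS S₀) (hvk _) (by simp; omega)
          omega
        · have hjlt := j.isLt
          have hj3 : 3 ≤ j.val := by omega
          refine ⟨⟨2, by omega⟩, ?_⟩
          rw [cum_eq_range]
          rw [show ((⟨2, by omega⟩ : Fin n)).val + 1 = 3 from rfl]
          rw [Finset.sum_range_succ, Finset.sum_range_succ, Finset.sum_range_one]
          have e0 : extZ (pS T) 0 = -1 := by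
            simp only [extZ]
            rw [dif_pos (show 0 < n by omega)]
            have hzz : (⟨0, show 0 < n by omega⟩ : Fin n) = z := rfl
            rw [hzz, hw z, if_pos rfl, if_neg (Ne.symm hj0)]
            simp [pS, h0S]
          have e12 : ∀ (m : ℕ) (hm : m < n), 0 < m → m < j.val → extZ (pS T) m = 1 := by
            intro m hm hm0 hmj
            simp only [extZ]
            rw [dif_pos hm]
            have h1 : (⟨m, hm⟩ : Fin n) ∈ S₀ := hjmin _ hmj
            have h2 : (⟨m, hm⟩ : Fin n) ≠ z := by
              simp only [ne_eq, Fin.ext_iff]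
              omega
            have h3 : (⟨m, hm⟩ : Fin n) ≠ j := by
              simp only [ne_eq, Fin.ext_iff]
              omega
            simp [pS, hT, Finset.mem_insert, Finset.mem_erase, h1, h2, h3]
          rw [e0, e12 1 (by omega) (by omega) (by omega), e12 2 (by omega) (by omega) (by omega)]
          norm_num
    obtain ⟨kp, hkp⟩ := hpos
    refine ⟨T, ⟨isPM_pS T, ?_, ?_⟩, ?_⟩
    · intro h
      have := h kp
      rw [cum_zero] at this
      omega
    · intro h
      have := h z
      rw [cum_zero] at this
      omega
    · intro S'
      calc |dotp (pS T) c| ≤ dotp v c := habsw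
        _ = |dotp v c| := habs.symm
        _ ≤ |dotp (pS S') c| := hmin S'


theorem stmt15 {n : ℕ} (hn : 3 ≤ n) (c : Fin n → ℤ) (hc : monoc c) :
    ∃ S : Finset (Fin n), inQ (pS S) ∧
      ∀ S' : Finset (Fin n), |dotp (pS S) c| ≤ |dotp (pS S') c| := by
  obtain ⟨S₀, -, hmin⟩ := Finset.exists_min_image Finset.univ
    (fun S => |dotp (pS S) c|) ⟨∅, Finset.mem_univ _⟩
  have hmin' : ∀ S', |dotp (pS S₀) c| ≤ |dotp (pS S') c| :=
    fun S' => hmin S' (Finset.mem_univ _)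
  by_cases hQ : inQ (pS S₀)
  · exact ⟨S₀, hQ, hmin'⟩
  · have hPM := isPM_pS S₀
    have hor : ple (pS S₀) 0 ∨ ple 0 (pS S₀) := by
      by_contra h
      push_neg at h
      exact hQ ⟨hPM, h.1, h.2⟩
    rcases hor with h | h
    · have hcompl : ple 0 (pS S₀ᶜ) := by
        intro k
        rw [cum_zero, cum_pS_compl]
        have := h k
        rw [cum_zero] at this
        omega
      have hminc : ∀ S', |dotp (pS S₀ᶜ) c| ≤ |dotp (pS S') c| := by
        intro S'
        rw [dotp_pS_compl, abs_neg]
        exact hmin' S'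
      exact main_lemma hn c hc S₀ᶜ hminc hcompl
    · exact main_lemma hn c hc S₀ hmin' h
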